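/- Let k ≥ 2 and d ≥ 1 be integers, let Λ ⊆ F_2^n belong to the family 𝚲(2dk) with |Λ| ≥ 4d², and let Q be a subset of d·̇Λ. Then for every integer p with 2 ≤ p ≤ k one has T_p(Q) ≤ 2^{8dp} p^{dp} |Q|^p. -/

import Mathlib

open Finset

/-- `T_k(A)`: the number of `2k`-tuples `(a_1,…,a_k,a'_1,…,a'_k) ∈ A^{2k}` with
`a_1+⋯+a_k = a'_1+⋯+a'_k`. -/
def addEnergy {G : Type*} [AddCommGroup G] [DecidableEq G] (k : ℕ) (A : Finset G) : ℕ :=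
  (((Fintype.piFinset fun _ : Fin k => A) ×ˢ (Fintype.piFinset fun _ : Fin k => A)).filter
    fun v => ∑ i, v.1 i = ∑ i, v.2 i).card

/-- `Λ` belongs to the family `𝚲(m)`: no nonempty subset of `Λ` of size at most `m`
has zero sum. -/
def InLambdaFamily {G : Type*} [AddCommGroup G] (m : ℕ) (Λ : Finset G) : Prop :=
  ∀ S ⊆ Λ, S.Nonempty → S.card ≤ m → ∑ x ∈ S, x ≠ 0

/-- `d ·̇ Λ`: the set of all sums of `d` pairwise distinct elements of `Λ`. -/
def dDot {G : Type*} [AddCommGroup G] [DecidableEq G] (d : ℕ) (Λ : Finset G) : Finset G :=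
  (Λ.powersetCard d).image fun S => ∑ x ∈ S, x

set_option maxHeartbeats 1000000


lemma choose_le_aux (p j : ℕ) : (2*p).choose (2*j) ≤ p.choose j * (2*p-1)^j := by
  induction j with
  | zero => simp
  | succ j ih =>
    rcases Nat.lt_or_ge j p with hj | hj
    · obtain ⟨m, rfl⟩ : ∃ m, p = j + m + 1 := ⟨p - j - 1, by omega⟩
      set P := j + m + 1 with hP
      have h1 := Nat.choose_succ_right_eq (2*P) (2*j)
      have h2 := Nat.choose_succ_right_eq (2*P) (2*j+1)
      have h3 := Nat.choose_succ_right_eq P j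
      have e1 : 2*P - 2*j = 2*m+2 := by omega
      have e2 : 2*P - (2*j+1) = 2*m+1 := by omega
      have e3 : P - j = m + 1 := by omega
      rw [e1] at h1; rw [e2] at h2; rw [e3] at h3
      have key : (2*P).choose (2*(j+1)) * ((2*j+1)*(2*j+2)) ≤
          (P.choose (j+1) * (2*P-1)^(j+1)) * ((2*j+1)*(2*j+2)) := by
        have w1 : (2*m+1) ≤ (2*P-1)*(2*j+1) := by
          have : 2*P-1 = 2*j+2*m+1 := by omega
          nlinarith [this]
        calc (2*P).choose (2*(j+1)) * ((2*j+1)*(2*j+2))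
            = ((2*P).choose (2*j+2) * (2*j+2)) * (2*j+1) := by ring_nf
          _ = ((2*P).choose (2*j+1) * (2*j+1)) * (2*m+1) := by rw [h2]; ring
          _ = ((2*P).choose (2*j)) * ((2*m+2) * (2*m+1)) := by rw [h1]; ring
          _ ≤ (P.choose j * (2*P-1)^j) * ((2*m+2) * (2*m+1)) := by
              exact Nat.mul_le_mul_right _ ih
          _ ≤ (P.choose j * (2*P-1)^j) * ((2*m+2) * ((2*P-1)*(2*j+1))) := by
              exact Nat.mul_le_mul_left _ (Nat.mul_le_mul_left _ w1)
          _ = ((P.choose j * (m+1)) * ((2*P-1)^j * (2*P-1))) * (2*(2*j+1)) := by ring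
          _ = (P.choose (j+1) * (2*P-1)^(j+1)) * ((2*j+1)*(2*j+2)) := by
              rw [← h3, ← pow_succ]; ring
      exact Nat.le_of_mul_le_mul_right key (by positivity)
    · rw [Nat.choose_eq_zero_of_lt (by omega)]
      exact Nat.zero_le _

lemma two_point (p : ℕ) (a b : ℝ) :
    (a+b)^(2*p) + (a-b)^(2*p) ≤ 2 * (a^2 + ((2*p-1 : ℕ) : ℝ) * b^2)^p := by
  have hexp1 : (a+b)^(2*p) = ∑ k ∈ range (2*p+1), a^k * b^(2*p-k) * ((2*p).choose k : ℝ) :=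
    add_pow a b (2*p)
  have hexp2 : (a-b)^(2*p)
      = ∑ k ∈ range (2*p+1), a^k * ((-1)^(2*p-k) * b^(2*p-k)) * ((2*p).choose k : ℝ) := by
    rw [sub_eq_add_neg, add_pow a (-b) (2*p)]
    refine Finset.sum_congr rfl fun k _ => ?_
    rw [neg_pow]
  have hL : (a+b)^(2*p) + (a-b)^(2*p)
      = ∑ k ∈ range (2*p+1),
          (1 + (-1:ℝ)^(2*p-k)) * (a^k * b^(2*p-k) * ((2*p).choose k : ℝ)) := by
    rw [hexp1, hexp2, ← Finset.sum_add_distrib]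
    exact Finset.sum_congr rfl fun k _ => by ring
  -- the sum is supported on even k; reindex by k = 2j
  have hfilter : (range (2*p+1)).filter (fun k => Even k) = (range (p+1)).image (fun j => 2*j) := by
    ext k
    simp only [mem_filter, mem_range, mem_image, Nat.even_iff]
    constructor
    · rintro ⟨hk, ht⟩; exact ⟨k/2, by omega, by omega⟩
    · rintro ⟨t, ht, rfl⟩; exact ⟨by omega, by omega⟩
  have hL2 : (a+b)^(2*p) + (a-b)^(2*p)
      = ∑ j ∈ range (p+1),
          (1 + (-1:ℝ)^(2*p-2*j)) * (a^(2*j) * b^(2*p-2*j) * ((2*p).choose (2*j) : ℝ)) := by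
    rw [hL, ← Finset.sum_filter_of_ne (p := fun k => Even k), hfilter,
      Finset.sum_image (fun x _ y _ h => by omega)]
    intro k hk hne
    by_contra hodd
    apply hne
    have h1 : Odd (2*p - k) := by
      rw [mem_range] at hk
      rw [Nat.even_iff] at hodd
      rw [Nat.odd_iff]
      omega
    rw [h1.neg_one_pow]
    ring
  rw [hL2, add_pow, Finset.mul_sum]
  apply Finset.sum_le_sum
  intro j hj
  rw [mem_range] at hj
  have hj' : j ≤ p := by omega
  have heven : Even (2*p - 2*j) := ⟨p - j, by omega⟩
  rw [heven.neg_one_pow]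
  have hb : 2*p - 2*j = 2*(p-j) := by omega
  have hchoose : ((2*p).choose (2*j) : ℝ) ≤ (p.choose j : ℝ) * ((2*p-1:ℕ):ℝ)^(p-j) := by
    have h1 : (2*p).choose (2*j) = (2*p).choose (2*(p-j)) := by
      rw [show 2*(p-j) = 2*p - 2*j by omega]
      exact (Nat.choose_symm (by omega : 2*j ≤ 2*p)).symm
    have h2 : p.choose (p-j) = p.choose j := Nat.choose_symm hj'
    calc ((2*p).choose (2*j) : ℝ) = ((2*p).choose (2*(p-j)) : ℝ) := by rw [h1]
      _ ≤ (((p.choose (p-j)) * (2*p-1)^(p-j) : ℕ) : ℝ) := by exact_mod_cast choose_le_aux p (p-j)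
      _ = (p.choose j : ℝ) * ((2*p-1:ℕ):ℝ)^(p-j) := by rw [h2]; push_cast; ring
  have hnn : (0:ℝ) ≤ a^(2*j) * b^(2*(p-j)) := by
    rw [pow_mul, pow_mul]; positivity
  calc (1 + 1) * (a^(2*j) * b^(2*p-2*j) * ((2*p).choose (2*j) : ℝ))
      = 2 * ((a^(2*j) * b^(2*(p-j))) * ((2*p).choose (2*j) : ℝ)) := by rw [hb]; ring
    _ ≤ 2 * ((a^(2*j) * b^(2*(p-j))) * ((p.choose j : ℝ) * ((2*p-1:ℕ):ℝ)^(p-j))) := by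
        have := mul_le_mul_of_nonneg_left hchoose hnn
        linarith
    _ = 2 * ((a^2)^j * (((2*p-1:ℕ):ℝ) * b^2)^(p-j) * (p.choose j : ℝ)) := by
        rw [mul_pow, ← pow_mul, ← pow_mul]; ring

noncomputable def cube (ι : Type*) [Fintype ι] [DecidableEq ι] : Finset (ι → ℝ) :=
  Fintype.piFinset fun _ => ({-1, 1} : Finset ℝ)

lemma card_cube (ι : Type*) [Fintype ι] [DecidableEq ι] :
    (cube ι).card = 2 ^ Fintype.card ι := by
  rw [cube, Fintype.card_piFinset]
  have : ({-1, 1} : Finset ℝ).card = 2 := by norm_num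
  simp [this]

lemma hc {ι : Type*} [Fintype ι] [DecidableEq ι] (p : ℕ) (hp : 1 ≤ p)
    (V : Finset ι) (c : Finset ι → ℝ) :
    ∑ x ∈ cube ι, (∑ S ∈ V.powerset, c S * ∏ i ∈ S, x i) ^ (2*p)
      ≤ (2:ℝ) ^ Fintype.card ι *
        (∑ S ∈ V.powerset, ((2*p-1 : ℕ) : ℝ) ^ S.card * c S ^ 2) ^ p := by
  induction V using Finset.cons_induction generalizing c with
  | empty =>
    rw [Finset.powerset_empty]
    simp only [Finset.sum_singleton, Finset.prod_empty, mul_one, Finset.card_empty, pow_zero,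
      one_mul, Finset.sum_const, nsmul_eq_mul, card_cube]
    rw [pow_mul]
    push_cast
    ring_nf
    exact le_rfl
  | cons v V' hv ih =>
    have hw0 : (0:ℝ) ≤ ((2*p-1 : ℕ) : ℝ) := Nat.cast_nonneg _
    set w : ℝ := ((2*p-1 : ℕ) : ℝ) with hwdef
    have hvS : ∀ S ∈ V'.powerset, v ∉ S := fun S hS hvS' => hv (Finset.mem_powerset.1 hS hvS')
    have hF : ∀ x : ι → ℝ, (∑ S ∈ (Finset.cons v V' hv).powerset, c S * ∏ i ∈ S, x i)
        = (∑ S ∈ V'.powerset, c S * ∏ i ∈ S, x i)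
          + x v * (∑ S ∈ V'.powerset, c (insert v S) * ∏ i ∈ S, x i) := by
      intro x
      rw [Finset.cons_eq_insert, Finset.sum_powerset_insert hv]
      congr 1
      rw [Finset.mul_sum]
      refine Finset.sum_congr rfl fun S hS => ?_
      rw [Finset.prod_insert (hvS S hS)]
      ring
    set A : (ι → ℝ) → ℝ := fun x => ∑ S ∈ V'.powerset, c S * ∏ i ∈ S, x i with hA
    set B : (ι → ℝ) → ℝ := fun x => ∑ S ∈ V'.powerset, c (insert v S) * ∏ i ∈ S, x i with hB
    -- cube facts
    have hmem : ∀ x ∈ cube ι, x v = -1 ∨ x v = 1 := by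
      intro x hx
      have := Fintype.mem_piFinset.1 hx v
      simpa using this
    have hsq : ∀ x ∈ cube ι, (x v)^2 = 1 := by
      intro x hx; rcases hmem x hx with h | h <;> rw [h] <;> norm_num
    -- the sign flip involution
    set σ : (ι → ℝ) → (ι → ℝ) := fun x => Function.update x v (-(x v)) with hσ
    have hσv : ∀ x, σ x v = -(x v) := fun x => Function.update_self v _ x
    have hσne : ∀ (x) (i), i ≠ v → σ x i = x i := fun x i hi => Function.update_of_ne hi _ x
    have hσcube : ∀ x ∈ cube ι, σ x ∈ cube ι := by
      intro x hx
      rw [cube, Fintype.mem_piFinset]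
      intro i
      by_cases h : i = v
      · subst h
        rw [hσv]
        rcases hmem x hx with h | h <;> rw [h] <;> simp
      · rw [hσne x i h]
        exact Fintype.mem_piFinset.1 hx i
    have hσσ : ∀ x, σ (σ x) = x := by
      intro x
      funext i
      by_cases h : i = v
      · subst h; rw [hσv, hσv, neg_neg]
      · rw [hσne _ i h, hσne _ i h]
    have hσA : ∀ x, A (σ x) = A x := by
      intro x
      refine Finset.sum_congr rfl fun S hS => ?_
      congr 1
      refine Finset.prod_congr rfl fun i hiS => hσne x i (fun he => hvS S hS (he ▸ hiS))
    have hσB : ∀ x, B (σ x) = B x := by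
      intro x
      refine Finset.sum_congr rfl fun S hS => ?_
      congr 1
      refine Finset.prod_congr rfl fun i hiS => hσne x i (fun he => hvS S hS (he ▸ hiS))
    have hswap : ∑ x ∈ cube ι, (A x - x v * B x)^(2*p)
        = ∑ x ∈ cube ι, (A x + x v * B x)^(2*p) := by
      refine Finset.sum_nbij' σ σ hσcube hσcube (fun x _ => hσσ x) (fun x _ => hσσ x) ?_
      intro x hx
      rw [hσA, hσB, hσv]
      ring_nf
    -- two-point inequality
    have key1 : ∑ x ∈ cube ι, (A x + x v * B x)^(2*p)
        ≤ ∑ x ∈ cube ι, (A x ^ 2 + w * B x ^ 2) ^ p := by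
      have h2 : ∑ x ∈ cube ι, ((A x + x v * B x)^(2*p) + (A x - x v * B x)^(2*p))
          ≤ ∑ x ∈ cube ι, 2 * (A x^2 + w * B x^2)^p := by
        apply Finset.sum_le_sum
        intro x hx
        have h3 := two_point p (A x) (x v * B x)
        have h4 : (x v * B x)^2 = B x^2 := by rw [mul_pow, hsq x hx, one_mul]
        rw [h4] at h3
        exact h3
      rw [Finset.sum_add_distrib, hswap, ← Finset.mul_sum] at h2
      linarith
    -- Minkowski + induction hypothesis
    set Ra : ℝ := ∑ S ∈ V'.powerset, w ^ S.card * c S ^ 2 with hRa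
    set Rb : ℝ := ∑ S ∈ V'.powerset, w ^ S.card * c (insert v S) ^ 2 with hRb
    have hRa0 : 0 ≤ Ra := Finset.sum_nonneg fun S _ => by positivity
    have hRb0 : 0 ≤ Rb := Finset.sum_nonneg fun S _ => by positivity
    have hIA : ∑ x ∈ cube ι, A x ^ (2*p) ≤ (2:ℝ) ^ Fintype.card ι * Ra ^ p := ih c
    have hIB : ∑ x ∈ cube ι, B x ^ (2*p) ≤ (2:ℝ) ^ Fintype.card ι * Rb ^ p :=
      ih (fun S => c (insert v S))
    set q : ℝ := (p : ℝ) with hqdef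
    have hq1 : (1:ℝ) ≤ q := by rw [hqdef]; exact_mod_cast hp
    have hq0 : q ≠ 0 := by linarith
    have hqpos : (0:ℝ) < q := by linarith
    have hrn : ∀ y : ℝ, y ^ q = y ^ p := fun y => Real.rpow_natCast y p
    set C : ℝ := (2:ℝ) ^ Fintype.card ι with hC
    have hC0 : (0:ℝ) ≤ C := by positivity
    have mink : ∑ x ∈ cube ι, (A x^2 + w * B x^2)^p ≤ C * (Ra + w * Rb)^p := by
      have hLnn : (0:ℝ) ≤ ∑ x ∈ cube ι, (A x^2 + w * B x^2)^p :=
        Finset.sum_nonneg fun x _ => by positivity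
      have h1 := Real.Lp_add_le_of_nonneg (s := cube ι) (f := fun x => A x^2)
        (g := fun x => w * B x^2) (p := q) hq1
        (fun x _ => by positivity) (fun x _ => by positivity)
      simp only [hrn] at h1
      -- identify the three sums
      have e2 : ∑ x ∈ cube ι, (A x^2) ^ p = ∑ x ∈ cube ι, A x ^ (2*p) :=
        Finset.sum_congr rfl fun x _ => by rw [← pow_mul]
      have e3 : ∑ x ∈ cube ι, (w * B x^2) ^ p = w^p * ∑ x ∈ cube ι, B x ^ (2*p) := by
        rw [Finset.mul_sum]
        exact Finset.sum_congr rfl fun x _ => by rw [mul_pow, ← pow_mul]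
      rw [e2, e3] at h1
      -- bound the right side
      have hAnn : (0:ℝ) ≤ ∑ x ∈ cube ι, A x ^ (2*p) :=
        Finset.sum_nonneg fun x _ => by rw [pow_mul]; positivity
      have hBnn : (0:ℝ) ≤ ∑ x ∈ cube ι, B x ^ (2*p) :=
        Finset.sum_nonneg fun x _ => by rw [pow_mul]; positivity
      have hA1 : (∑ x ∈ cube ι, A x ^ (2*p)) ^ (1/q) ≤ C ^ (1/q) * Ra := by
        calc (∑ x ∈ cube ι, A x ^ (2*p)) ^ (1/q) ≤ (C * Ra ^ p) ^ (1/q) :=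
              Real.rpow_le_rpow hAnn hIA (by positivity)
          _ = C ^ (1/q) * Ra := by
              rw [Real.mul_rpow hC0 (by positivity), ← hrn Ra, ← Real.rpow_mul hRa0,
                mul_one_div, div_self hq0, Real.rpow_one]
      have hB1 : (w^p * ∑ x ∈ cube ι, B x ^ (2*p)) ^ (1/q) ≤ C ^ (1/q) * (w * Rb) := by
        calc (w^p * ∑ x ∈ cube ι, B x ^ (2*p)) ^ (1/q) ≤ (w^p * (C * Rb ^ p)) ^ (1/q) := by
              apply Real.rpow_le_rpow (by positivity)
                (mul_le_mul_of_nonneg_left hIB (by positivity)) (by positivity)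
          _ = C ^ (1/q) * (w * Rb) := by
              rw [show w^p * (C * Rb^p) = C * (w * Rb)^p by rw [mul_pow]; ring]
              rw [Real.mul_rpow hC0 (by positivity), ← hrn (w * Rb),
                ← Real.rpow_mul (by positivity : (0:ℝ) ≤ w * Rb),
                mul_one_div, div_self hq0, Real.rpow_one]
      have h5 : (∑ x ∈ cube ι, (A x^2 + w * B x^2)^p) ^ (1/q) ≤ C ^ (1/q) * (Ra + w * Rb) := by
        calc (∑ x ∈ cube ι, (A x^2 + w * B x^2)^p) ^ (1/q)
            ≤ (∑ x ∈ cube ι, A x ^ (2*p)) ^ (1/q) + (w^p * ∑ x ∈ cube ι, B x ^ (2*p)) ^ (1/q) := h1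
          _ ≤ C ^ (1/q) * Ra + C ^ (1/q) * (w * Rb) := add_le_add hA1 hB1
          _ = C ^ (1/q) * (Ra + w * Rb) := by ring
      have h6 := Real.rpow_le_rpow (Real.rpow_nonneg hLnn _) h5 (le_of_lt hqpos)
      rw [← Real.rpow_mul hLnn, one_div_mul_cancel hq0, Real.rpow_one,
        Real.mul_rpow (Real.rpow_nonneg hC0 _) (by positivity : (0:ℝ) ≤ Ra + w * Rb),
        ← Real.rpow_mul hC0, one_div_mul_cancel hq0, Real.rpow_one, hrn] at h6
      exact h6
    have hsplit : ∑ S ∈ (Finset.cons v V' hv).powerset, w ^ S.card * c S ^ 2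
        = Ra + w * Rb := by
      rw [Finset.cons_eq_insert, Finset.sum_powerset_insert hv]
      congr 1
      rw [hRb, Finset.mul_sum]
      refine Finset.sum_congr rfl fun S hS => ?_
      rw [Finset.card_insert_of_notMem (hvS S hS), pow_succ]
      ring
    calc ∑ x ∈ cube ι, (∑ S ∈ (Finset.cons v V' hv).powerset, c S * ∏ i ∈ S, x i) ^ (2*p)
        = ∑ x ∈ cube ι, (A x + x v * B x) ^ (2*p) :=
          Finset.sum_congr rfl fun x _ => by rw [hF]
      _ ≤ ∑ x ∈ cube ι, (A x ^ 2 + w * B x ^ 2) ^ p := key1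
      _ ≤ C * (Ra + w * Rb) ^ p := mink
      _ = C * (∑ S ∈ (Finset.cons v V' hv).powerset, w ^ S.card * c S ^ 2) ^ p := by
          rw [hsplit]

lemma count_even_tuples {ι κ : Type*} [Fintype ι] [DecidableEq ι] [Fintype κ] [DecidableEq κ]
    (p d : ℕ) (hp : 1 ≤ p) (hκ : Fintype.card κ = 2*p)
    (𝒯 : Finset (Finset ι)) (hd : ∀ S ∈ 𝒯, S.card ≤ d) :
    ((Fintype.piFinset fun _ : κ => 𝒯).filter
        (fun g => ∀ i : ι, Even ((univ.filter fun j => i ∈ g j).card))).card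
      ≤ ((2*p-1)^d * 𝒯.card) ^ p := by
  classical
  -- Step 1: the moment identity
  have key : ∑ x ∈ cube ι, (∑ S ∈ 𝒯, ∏ i ∈ S, x i) ^ (2*p)
      = (2:ℝ) ^ Fintype.card ι *
        (((Fintype.piFinset fun _ : κ => 𝒯).filter
          (fun g => ∀ i : ι, Even ((univ.filter fun j => i ∈ g j).card))).card : ℝ) := by
    have expand : ∀ x : ι → ℝ, (∑ S ∈ 𝒯, ∏ i ∈ S, x i) ^ (2*p)
        = ∑ g ∈ Fintype.piFinset (fun _ : κ => 𝒯), ∏ j : κ, ∏ i ∈ g j, x i := by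
      intro x
      calc (∑ S ∈ 𝒯, ∏ i ∈ S, x i) ^ (2*p)
          = ∏ _j : κ, (∑ S ∈ 𝒯, ∏ i ∈ S, x i) := by
            rw [Finset.prod_const, card_univ, hκ]
        _ = ∑ g ∈ Fintype.piFinset (fun _ : κ => 𝒯), ∏ j : κ, ∏ i ∈ g j, x i :=
            Finset.prod_univ_sum (fun _ : κ => 𝒯) (fun _ S => ∏ i ∈ S, x i)
    rw [Finset.sum_congr rfl fun x _ => expand x, Finset.sum_comm]
    -- inner sum for fixed g
    have inner : ∀ g : κ → Finset ι, (∀ j, g j ∈ 𝒯) →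
        ∑ x ∈ cube ι, ∏ j : κ, ∏ i ∈ g j, x i
          = if (∀ i : ι, Even ((univ.filter fun j => i ∈ g j).card))
            then (2:ℝ) ^ Fintype.card ι else 0 := by
      intro g hg
      have swap : ∀ x : ι → ℝ, ∏ j : κ, ∏ i ∈ g j, x i
          = ∏ i : ι, x i ^ ((univ.filter fun j => i ∈ g j).card) := by
        intro x
        have h1 : ∀ j : κ, ∏ i ∈ g j, x i = ∏ i : ι, (if i ∈ g j then x i else 1) := by
          intro j
          rw [← Finset.prod_filter]
          congr 1
          ext i
          simp
        rw [Finset.prod_congr rfl fun j _ => h1 j, Finset.prod_comm]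
        refine Finset.prod_congr rfl fun i _ => ?_
        rw [Finset.prod_ite, Finset.prod_const, Finset.prod_const_one, mul_one]
      rw [Finset.sum_congr rfl fun x _ => swap x]
      rw [cube, (Finset.prod_univ_sum (fun _ : ι => ({-1, 1} : Finset ℝ))
        (fun i t => t ^ ((univ.filter fun j => i ∈ g j).card))).symm]
      have h2 : ∀ i : ι, ∑ t ∈ ({-1, 1} : Finset ℝ), t ^ ((univ.filter fun j => i ∈ g j).card)
          = if Even ((univ.filter fun j => i ∈ g j).card) then 2 else 0 := by
        intro i
        rw [Finset.sum_insert (by norm_num), Finset.sum_singleton]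
        rcases Nat.even_or_odd ((univ.filter fun j => i ∈ g j).card) with h | h
        · rw [h.neg_one_pow, one_pow, if_pos h]; norm_num
        · rw [h.neg_one_pow, one_pow, if_neg (Nat.not_even_iff_odd.2 h)]; norm_num
      rw [Finset.prod_congr rfl fun i _ => h2 i]
      by_cases hall : ∀ i : ι, Even ((univ.filter fun j => i ∈ g j).card)
      · rw [if_pos hall]
        rw [Finset.prod_congr rfl fun i _ => if_pos (hall i), Finset.prod_const, card_univ]
      · rw [if_neg hall]
        push_neg at hall
        obtain ⟨i0, hi0⟩ := hall
        exact Finset.prod_eq_zero (Finset.mem_univ i0) (by rw [if_neg hi0])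
    rw [Finset.sum_congr rfl fun g hg => inner g (fun j => Fintype.mem_piFinset.1 hg j)]
    rw [Finset.sum_ite, Finset.sum_const, Finset.sum_const_zero, add_zero, nsmul_eq_mul]
    ring
  -- Step 2: apply hc with indicator coefficients
  set c : Finset ι → ℝ := fun S => if S ∈ 𝒯 then 1 else 0 with hc_def
  have hsum_eq : ∀ x : ι → ℝ, (∑ S ∈ (univ : Finset ι).powerset, c S * ∏ i ∈ S, x i)
      = ∑ S ∈ 𝒯, ∏ i ∈ S, x i := by
    intro x
    rw [Finset.sum_congr rfl (fun S _ => by rw [hc_def, ite_mul, one_mul, zero_mul])]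
    rw [← Finset.sum_filter]
    congr 1
    ext S
    simp [Finset.mem_powerset, Finset.subset_univ]
  have hup := hc p hp (univ : Finset ι) c
  rw [Finset.sum_congr rfl fun x _ => congrArg (· ^ (2*p)) (hsum_eq x)] at hup
  rw [key] at hup
  -- bound the weight sum
  have hwbound : (∑ S ∈ (univ : Finset ι).powerset, ((2*p-1 : ℕ) : ℝ) ^ S.card * c S ^ 2)
      ≤ ((2*p-1 : ℕ) : ℝ) ^ d * 𝒯.card := by
    have h1 : ∀ S ∈ (univ : Finset ι).powerset, ((2*p-1 : ℕ) : ℝ) ^ S.card * c S ^ 2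
        = if S ∈ 𝒯 then ((2*p-1 : ℕ) : ℝ) ^ S.card else 0 := by
      intro S _
      rw [hc_def]
      by_cases h : S ∈ 𝒯 <;> simp [h]
    rw [Finset.sum_congr rfl h1, ← Finset.sum_filter]
    have h2 : (univ : Finset ι).powerset.filter (· ∈ 𝒯) = 𝒯 := by
      ext S; simp [Finset.mem_powerset, Finset.subset_univ]
    rw [h2]
    calc ∑ S ∈ 𝒯, ((2*p-1 : ℕ) : ℝ) ^ S.card
        ≤ ∑ S ∈ 𝒯, ((2*p-1 : ℕ) : ℝ) ^ d := by
          apply Finset.sum_le_sum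
          intro S hS
          apply pow_le_pow_right₀ _ (hd S hS)
          have : 1 ≤ 2*p-1 := by omega
          exact_mod_cast this
      _ = ((2*p-1 : ℕ) : ℝ) ^ d * 𝒯.card := by rw [Finset.sum_const, nsmul_eq_mul]; ring
  -- conclude
  have hfinal : (((Fintype.piFinset fun _ : κ => 𝒯).filter
      (fun g => ∀ i : ι, Even ((univ.filter fun j => i ∈ g j).card))).card : ℝ)
      ≤ (((2*p-1)^d * 𝒯.card : ℕ) : ℝ) ^ p := by
    have hpow : (2:ℝ) ^ Fintype.card ι > 0 := by positivity
    have h3 : (∑ S ∈ (univ : Finset ι).powerset, ((2*p-1 : ℕ) : ℝ) ^ S.card * c S ^ 2) ^ p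
        ≤ (((2*p-1)^d * 𝒯.card : ℕ) : ℝ) ^ p := by
      apply pow_le_pow_left₀
      · apply Finset.sum_nonneg
        intro S _
        have : (0:ℝ) ≤ c S ^ 2 := sq_nonneg _
        positivity
      · calc _ ≤ ((2*p-1 : ℕ) : ℝ) ^ d * 𝒯.card := hwbound
          _ = (((2*p-1)^d * 𝒯.card : ℕ) : ℝ) := by push_cast; ring
    have := le_trans hup (by
      apply mul_le_mul_of_nonneg_left h3 (le_of_lt hpow))
    exact le_of_mul_le_mul_left this hpow
  exact_mod_cast hfinal

theorem stmt3 {n : ℕ} (k d : ℕ) (hk : 2 ≤ k) (hd : 1 ≤ d)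
    (Λ : Finset (Fin n → ZMod 2)) (hΛ : InLambdaFamily (2 * d * k) Λ)
    (hΛcard : 4 * d ^ 2 ≤ Λ.card)
    (Q : Finset (Fin n → ZMod 2)) (hQ : Q ⊆ dDot d Λ) :
    ∀ p : ℕ, 2 ≤ p → p ≤ k →
      addEnergy p Q ≤ 2 ^ (8 * d * p) * p ^ (d * p) * Q.card ^ p := by
  intro p hp2 hpk
  classical
  have hp1 : 1 ≤ p := by omega
  -- characteristic two facts
  have hself : ∀ x : Fin n → ZMod 2, x + x = 0 := by
    intro x; funext t
    have h2 : ∀ a : ZMod 2, a + a = 0 := by decide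
    exact h2 (x t)
  have hsmul : ∀ (m : ℕ) (x : Fin n → ZMod 2), m • x = if Even m then 0 else x := by
    intro m x
    rcases Nat.even_or_odd m with h | h
    · obtain ⟨t, rfl⟩ := h
      rw [if_pos ⟨t, rfl⟩, add_nsmul, hself]
    · obtain ⟨t, rfl⟩ := h
      rw [if_neg (by rw [Nat.even_iff]; omega), add_nsmul, one_nsmul,
        show 2*t = t + t by ring, add_nsmul, hself, zero_add]
  -- choose representing sets
  have hrep : ∀ q ∈ Q, ∃ S : Finset (Fin n → ZMod 2),
      S ∈ Λ.powersetCard d ∧ ∑ x ∈ S, x = q := by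
    intro q hq
    obtain ⟨S, hS, hsum⟩ := Finset.mem_image.1 (hQ hq)
    exact ⟨S, hS, hsum⟩
  choose! φ hφ1 hφ2 using hrep
  set 𝒯 : Finset (Finset (Fin n → ZMod 2)) := Q.image φ with h𝒯
  have h𝒯card : 𝒯.card ≤ Q.card := Finset.card_image_le
  have h𝒯d : ∀ S ∈ 𝒯, S.card = d := by
    intro S hS
    obtain ⟨q, hq, rfl⟩ := Finset.mem_image.1 hS
    exact (Finset.mem_powersetCard.1 (hφ1 q hq)).2
  have h𝒯Λ : ∀ S ∈ 𝒯, S ⊆ Λ := by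
    intro S hS
    obtain ⟨q, hq, rfl⟩ := Finset.mem_image.1 hS
    exact (Finset.mem_powersetCard.1 (hφ1 q hq)).1
  have hκ : Fintype.card (Fin p ⊕ Fin p) = 2*p := by
    simp [two_mul]
  -- the injection into even tuples
  set Φ : ((Fin p → (Fin n → ZMod 2)) × (Fin p → (Fin n → ZMod 2)))
      → ((Fin p ⊕ Fin p) → Finset (Fin n → ZMod 2)) :=
    fun v => Sum.elim (fun i => φ (v.1 i)) (fun i => φ (v.2 i)) with hΦ
  set E := ((Fintype.piFinset fun _ : Fin p => Q) ×ˢ (Fintype.piFinset fun _ : Fin p => Q)).filter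
    (fun v => ∑ i, v.1 i = ∑ i, v.2 i) with hE
  set T := (Fintype.piFinset fun _ : Fin p ⊕ Fin p => 𝒯).filter
      (fun g => ∀ i : (Fin n → ZMod 2), Even ((univ.filter fun j => i ∈ g j).card)) with hT
  have hmaps : ∀ v ∈ E, Φ v ∈ T := by
    intro v hv
    rw [hE, Finset.mem_filter, Finset.mem_product] at hv
    obtain ⟨⟨hv1, hv2⟩, hvsum⟩ := hv
    have hv1' : ∀ i, v.1 i ∈ Q := fun i => Fintype.mem_piFinset.1 hv1 i
    have hv2' : ∀ i, v.2 i ∈ Q := fun i => Fintype.mem_piFinset.1 hv2 i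
    have hmem𝒯 : ∀ j, Φ v j ∈ 𝒯 := by
      intro j
      rcases j with i | i
      · exact Finset.mem_image_of_mem φ (hv1' i)
      · exact Finset.mem_image_of_mem φ (hv2' i)
    rw [hT, Finset.mem_filter]
    refine ⟨Fintype.mem_piFinset.2 hmem𝒯, ?_⟩
    -- parity
    set m : (Fin n → ZMod 2) → ℕ :=
      fun i => ((univ : Finset (Fin p ⊕ Fin p)).filter fun j => i ∈ Φ v j).card with hm
    set O : Finset (Fin n → ZMod 2) := univ.filter (fun i => ¬ Even (m i)) with hO
    have h1 : ∑ j : Fin p ⊕ Fin p, ∑ x ∈ Φ v j, x = 0 := by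
      rw [Fintype.sum_sum_type]
      have e1 : ∑ i : Fin p, ∑ x ∈ Φ v (Sum.inl i), x = ∑ i, v.1 i :=
        Finset.sum_congr rfl fun i _ => hφ2 _ (hv1' i)
      have e2 : ∑ i : Fin p, ∑ x ∈ Φ v (Sum.inr i), x = ∑ i, v.2 i :=
        Finset.sum_congr rfl fun i _ => hφ2 _ (hv2' i)
      rw [e1, e2, hvsum, hself]
    have h2 : ∑ j : Fin p ⊕ Fin p, ∑ x ∈ Φ v j, x = ∑ i ∈ O, i := by
      calc ∑ j : Fin p ⊕ Fin p, ∑ x ∈ Φ v j, x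
          = ∑ j : Fin p ⊕ Fin p, ∑ i ∈ (univ : Finset (Fin n → ZMod 2)),
              (if i ∈ Φ v j then i else 0) := by
            refine Finset.sum_congr rfl fun j _ => ?_
            rw [Finset.sum_ite_mem, Finset.univ_inter]
        _ = ∑ i ∈ (univ : Finset (Fin n → ZMod 2)), ∑ j : Fin p ⊕ Fin p,
              (if i ∈ Φ v j then i else 0) := Finset.sum_comm
        _ = ∑ i ∈ (univ : Finset (Fin n → ZMod 2)), (m i) • i := by
            refine Finset.sum_congr rfl fun i _ => ?_
            rw [hm, ← Finset.sum_filter, Finset.sum_const]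
        _ = ∑ i ∈ (univ : Finset (Fin n → ZMod 2)), (if ¬ Even (m i) then i else 0) := by
            refine Finset.sum_congr rfl fun i _ => ?_
            rw [hsmul, ite_not]
        _ = ∑ i ∈ O, i := by rw [hO, Finset.sum_filter]
    by_contra hbad
    push_neg at hbad
    obtain ⟨i0, hi0⟩ := hbad
    have hOne : O.Nonempty := ⟨i0, by rw [hO, Finset.mem_filter]; exact ⟨Finset.mem_univ _, hi0⟩⟩
    have hOΛ : O ⊆ Λ := by
      intro i hi
      rw [hO, Finset.mem_filter] at hi
      have : m i ≠ 0 := fun h0 => hi.2 (h0 ▸ Even.zero)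
      have : ∃ j, i ∈ Φ v j := by
        by_contra hno
        push_neg at hno
        apply this
        rw [hm, Finset.card_eq_zero, Finset.filter_eq_empty_iff]
        exact fun j _ => hno j
      obtain ⟨j, hj⟩ := this
      exact h𝒯Λ _ (hmem𝒯 j) hj
    have hOcard : O.card ≤ 2 * d * k := by
      have hsub : O ⊆ (univ : Finset (Fin p ⊕ Fin p)).biUnion (fun j => Φ v j) := by
        intro i hi
        rw [hO, Finset.mem_filter] at hi
        have : m i ≠ 0 := fun h0 => hi.2 (h0 ▸ Even.zero)
        rw [Finset.mem_biUnion]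
        by_contra hno
        push_neg at hno
        apply this
        rw [hm, Finset.card_eq_zero, Finset.filter_eq_empty_iff]
        exact fun j _ => hno j (Finset.mem_univ j)
      calc O.card ≤ _ := Finset.card_le_card hsub
        _ ≤ ∑ j : Fin p ⊕ Fin p, (Φ v j).card := Finset.card_biUnion_le
        _ = ∑ _j : Fin p ⊕ Fin p, d :=
            Finset.sum_congr rfl fun j _ => h𝒯d _ (hmem𝒯 j)
        _ = 2 * p * d := by rw [Finset.sum_const, card_univ, hκ, smul_eq_mul]
        _ ≤ 2 * d * k := by nlinarith
    exact hΛ O hOΛ hOne hOcard (h2 ▸ h1)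
  have hinj : Set.InjOn Φ E := by
    intro v hv v' hv' heq
    have hv := Finset.mem_coe.1 hv
    have hv' := Finset.mem_coe.1 hv'
    rw [Finset.mem_filter, Finset.mem_product] at hv hv'
    have hv1' : ∀ i, v.1 i ∈ Q := fun i => Fintype.mem_piFinset.1 hv.1.1 i
    have hv2' : ∀ i, v.2 i ∈ Q := fun i => Fintype.mem_piFinset.1 hv.1.2 i
    have hw1' : ∀ i, v'.1 i ∈ Q := fun i => Fintype.mem_piFinset.1 hv'.1.1 i
    have hw2' : ∀ i, v'.2 i ∈ Q := fun i => Fintype.mem_piFinset.1 hv'.1.2 i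
    have h1 : v.1 = v'.1 := by
      funext i
      have := congrFun heq (Sum.inl i)
      simp only [hΦ, Sum.elim_inl] at this
      rw [← hφ2 _ (hv1' i), ← hφ2 _ (hw1' i), this]
    have h2 : v.2 = v'.2 := by
      funext i
      have := congrFun heq (Sum.inr i)
      simp only [hΦ, Sum.elim_inr] at this
      rw [← hφ2 _ (hv2' i), ← hφ2 _ (hw2' i), this]
    exact Prod.ext h1 h2
  have hcount : E.card ≤ T.card := Finset.card_le_card_of_injOn Φ hmaps hinj
  have hT_bound : T.card ≤ ((2*p-1)^d * 𝒯.card) ^ p :=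
    count_even_tuples p d hp1 hκ 𝒯 (fun S hS => le_of_eq (h𝒯d S hS))
  have harith : ((2*p-1)^d * 𝒯.card) ^ p ≤ 2 ^ (8 * d * p) * p ^ (d * p) * Q.card ^ p := by
    calc ((2*p-1)^d * 𝒯.card) ^ p ≤ ((2*p)^d * Q.card) ^ p := by
          apply Nat.pow_le_pow_left
          exact Nat.mul_le_mul (Nat.pow_le_pow_left (by omega) d) h𝒯card
      _ = (2*p)^(d*p) * Q.card ^ p := by rw [Nat.mul_pow, ← pow_mul]
      _ = 2^(d*p) * p^(d*p) * Q.card ^ p := by rw [Nat.mul_pow]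
      _ ≤ 2 ^ (8 * d * p) * p ^ (d * p) * Q.card ^ p := by
          apply Nat.mul_le_mul_right
          apply Nat.mul_le_mul_right
          exact Nat.pow_le_pow_right (by omega) (by nlinarith)
  calc addEnergy p Q = E.card := rfl
    _ ≤ T.card := hcount
    _ ≤ ((2*p-1)^d * 𝒯.card) ^ p := hT_bound
    _ ≤ _ := harith
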